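/- arXiv:2206.11367 — 5 statements merged into one kernel-verified Lean document; each statement's English description precedes it below -/
import Mathlib

section
/- Let m₁ ≥ 32/3 and m₄ > 0 be real constants, and let ν ∈ ℂ satisfy ν² = -(1/4)(m₁ - 4) (i.e. ν = (1/2)√(m₁-4)·i). Suppose f : ℝ → ℂ is twice differentiable on (0,∞) and satisfies the Bessel differential equation z²·f''(z) + z·f'(z) + (z² − ν²)·f(z) = 0 for all z > 0. Then the function w(t) := t⁻² · f((1/2)·m₄·t²) satisfies the temporal eigenfunction equation w''(t) + 5 t⁻¹ w'(t) + m₁ t⁻² w(t) + m₄² t² w(t) = 0 for all t > 0. -/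
open Complex Filter
set_option maxHeartbeats 1000000

/-- If `f` solves the Bessel equation of order `ν` with
`ν² = -(1/4)(m₁-4)` on `(0,∞)`, then `w t = t⁻² f((1/2) m₄ t²)` solves the
temporal eigenfunction equation
`w'' + 5 t⁻¹ w' + m₁ t⁻² w + m₄² t² w = 0` on `(0,∞)`. -/
theorem temporal_eigenfunction_of_bessel_m2_zero_m3_pos
    (m₁ m₄ : ℝ) (hm₁ : 32 / 3 ≤ m₁) (hm₄ : 0 < m₄)
    (ν : ℂ) (hν : ν ^ 2 = -(1 / 4) * ((m₁ : ℂ) - 4))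
    (f : ℝ → ℂ)
    (hf : ∀ z > (0 : ℝ), DifferentiableAt ℝ f z)
    (hf' : ∀ z > (0 : ℝ), DifferentiableAt ℝ (deriv f) z)
    (hBessel : ∀ z > (0 : ℝ),
      (z : ℂ) ^ 2 * deriv (deriv f) z + (z : ℂ) * deriv f z
        + ((z : ℂ) ^ 2 - ν ^ 2) * f z = 0)
    (w : ℝ → ℂ)
    (hw : ∀ t : ℝ, w t = ((t : ℂ) ^ 2)⁻¹ * f ((1 / 2) * m₄ * t ^ 2)) :
    ∀ t > (0 : ℝ),
      deriv (deriv w) t + 5 * (t : ℂ)⁻¹ * deriv w t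
        + (m₁ : ℂ) * ((t : ℂ) ^ 2)⁻¹ * w t
        + (m₄ : ℂ) ^ 2 * (t : ℂ) ^ 2 * w t = 0 := by
  have hwfun : w = fun t : ℝ => ((t : ℂ) ^ 2)⁻¹ * f ((1 / 2) * m₄ * t ^ 2) := funext hw
  subst hwfun
  set z : ℝ → ℝ := fun t => (1 / 2) * m₄ * t ^ 2 with hz_def
  set W1 : ℝ → ℂ := fun t =>
    -2 * ((t : ℂ) ^ 3)⁻¹ * f (z t) + (m₄ : ℂ) * (t : ℂ)⁻¹ * deriv f (z t) with hW1_def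
  have hzpos : ∀ t : ℝ, 0 < t → 0 < z t := by
    intro t ht; simp only [hz_def]; positivity
  have hzd : ∀ t : ℝ, HasDerivAt z (m₄ * t) t := by
    intro t
    have := (hasDerivAt_pow 2 t).const_mul ((1 / 2) * m₄)
    convert this using 1 ; rfl ; rfl ; push_cast ; ring
  have hFd : ∀ t : ℝ, 0 < t →
      HasDerivAt (fun x : ℝ => f (z x)) (((m₄ * t : ℝ)) • deriv f (z t)) t := by
    intro t ht
    exact ((hf _ (hzpos t ht)).hasDerivAt).scomp t (hzd t)
  have hF'd : ∀ t : ℝ, 0 < t →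
      HasDerivAt (fun x : ℝ => deriv f (z x)) (((m₄ * t : ℝ)) • deriv (deriv f) (z t)) t := by
    intro t ht
    exact ((hf' _ (hzpos t ht)).hasDerivAt).scomp t (hzd t)
  have htC : ∀ t : ℝ, 0 < t → ((t : ℂ) ≠ 0) := by
    intro t ht
    exact_mod_cast ne_of_gt ht
  -- helper: derivative of x ↦ (↑x ^ n)⁻¹
  have hinvpow : ∀ (n : ℕ) (t : ℝ), 0 < t →
      HasDerivAt (fun x : ℝ => ((x : ℂ) ^ n)⁻¹)
        (-((n : ℂ) * (t : ℂ) ^ (n - 1)) / ((t : ℂ) ^ n) ^ 2) t := by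
    intro n t ht
    have hC : HasDerivAt (fun y : ℂ => (y ^ n)⁻¹)
        (-((n : ℂ) * (t : ℂ) ^ (n - 1)) / ((t : ℂ) ^ n) ^ 2) (t : ℂ) :=
      (hasDerivAt_pow n ((t : ℂ))).inv (pow_ne_zero n (htC t ht))
    exact hC.comp_ofReal
  -- first derivative
  have hW1 : ∀ t : ℝ, 0 < t →
      HasDerivAt (fun t : ℝ => ((t : ℂ) ^ 2)⁻¹ * f (z t)) (W1 t) t := by
    intro t ht
    have ht0 : (t : ℂ) ≠ 0 := htC t ht
    have := (hinvpow 2 t ht).mul (hFd t ht)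
    convert this using 1
    · rfl
    · rfl
    simp only [hW1_def, Complex.real_smul]
    push_cast
    field_simp
  have hderiv1 : ∀ t : ℝ, 0 < t →
      deriv (fun t : ℝ => ((t : ℂ) ^ 2)⁻¹ * f (z t)) t = W1 t := by
    intro t ht; exact (hW1 t ht).deriv
  -- second derivative
  intro t ht
  have ht0 : (t : ℂ) ≠ 0 := htC t ht
  have hW2 : HasDerivAt W1
      (6 * ((t : ℂ) ^ 4)⁻¹ * f (z t) - 3 * (m₄ : ℂ) * ((t : ℂ) ^ 2)⁻¹ * deriv f (z t)
        + (m₄ : ℂ) ^ 2 * deriv (deriv f) (z t)) t := by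
    have h1 := ((hinvpow 3 t ht).const_mul (-2 : ℂ)).mul (hFd t ht)
    have h2 := ((hinvpow 1 t ht).const_mul ((m₄ : ℂ))).mul (hF'd t ht)
    have hsum := h1.add h2
    have heq : (fun x : ℝ => -2 * ((x : ℂ) ^ 3)⁻¹ * f (z x)
        + (m₄ : ℂ) * ((x : ℂ) ^ 1)⁻¹ * deriv f (z x)) = W1 := by
      funext x; simp only [hW1_def, pow_one]
    rw [← heq]
    convert hsum using 1
    · rfl
    · rfl
    simp only [Complex.real_smul]
    push_cast
    field_simp
    ring
  have e1 : deriv (deriv (fun t : ℝ => ((t : ℂ) ^ 2)⁻¹ * f (z t))) t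
      = 6 * ((t : ℂ) ^ 4)⁻¹ * f (z t) - 3 * (m₄ : ℂ) * ((t : ℂ) ^ 2)⁻¹ * deriv f (z t)
        + (m₄ : ℂ) ^ 2 * deriv (deriv f) (z t) := by
    have hEq : deriv (fun t : ℝ => ((t : ℂ) ^ 2)⁻¹ * f (z t)) =ᶠ[nhds t] W1 := by
      filter_upwards [isOpen_Ioi.mem_nhds (Set.mem_Ioi.mpr ht)] with s hs
      exact hderiv1 s hs
    rw [hEq.deriv_eq]
    exact hW2.deriv
  rw [e1, hderiv1 t ht]
  have B := hBessel (z t) (hzpos t ht)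
  have hzC : ((z t : ℝ) : ℂ) = (1 / 2) * (m₄ : ℂ) * (t : ℂ) ^ 2 := by
    simp only [hz_def]; push_cast; ring
  rw [hzC] at B
  simp only [hW1_def]
  set F := f (z t) with hF
  set F' := deriv f (z t) with hF'
  set F'' := deriv (deriv f) (z t) with hF''
  have hu : (t : ℂ) * (t : ℂ)⁻¹ = 1 := mul_inv_cancel₀ ht0
  simp only [← inv_pow]
  linear_combination 4 * (t : ℂ)⁻¹ ^ 4 * B + 4 * (t : ℂ)⁻¹ ^ 4 * F * hν
    - ((m₄ : ℂ) ^ 2 * (1 + (t : ℂ) * (t : ℂ)⁻¹ + (t : ℂ) ^ 2 * (t : ℂ)⁻¹ ^ 2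
          + (t : ℂ) ^ 3 * (t : ℂ)⁻¹ ^ 3) * F''
        + 2 * (m₄ : ℂ) * (t : ℂ)⁻¹ ^ 2 * (1 + (t : ℂ) * (t : ℂ)⁻¹) * F'
        + (m₄ : ℂ) ^ 2 * (t : ℂ) ^ 2 * (t : ℂ)⁻¹ ^ 2 * (1 + (t : ℂ) * (t : ℂ)⁻¹) * F) * hu
end

section
/- Let m₁ ≥ 32/3 and m₄ > 0 be real constants, and let ν ∈ ℂ satisfy ν² = -(1/4)(m₁ - 4) (i.e. ν = (1/2)√(m₁-4)·i). Suppose f : ℝ → ℂ is twice differentiable on (0,∞) and satisfies the modified Bessel differential equation z²·f''(z) + z·f'(z) − (z² + ν²)·f(z) = 0 for all z > 0. Then the function w(t) := t⁻² · f((1/2)·m₄·t²) satisfies the temporal eigenfunction equation w''(t) + 5 t⁻¹ w'(t) + m₁ t⁻² w(t) − m₄² t² w(t) = 0 for all t > 0. -/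
/-- If `f` solves the modified Bessel equation of order `ν` with
`ν² = -(1/4)(m₁-4)` on `(0,∞)`, then `w t = t⁻² f((1/2) m₄ t²)` solves the
temporal eigenfunction equation
`w'' + 5 t⁻¹ w' + m₁ t⁻² w − m₄² t² w = 0` on `(0,∞)`. -/
theorem temporal_eigenfunction_of_modified_bessel_m2_zero_m3_neg
    (m₁ m₄ : ℝ) (hm₁ : 32 / 3 ≤ m₁) (hm₄ : 0 < m₄)
    (ν : ℂ) (hν : ν ^ 2 = -(1 / 4) * ((m₁ : ℂ) - 4))
    (f : ℝ → ℂ)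
    (hf : ∀ z > (0 : ℝ), DifferentiableAt ℝ f z)
    (hf' : ∀ z > (0 : ℝ), DifferentiableAt ℝ (deriv f) z)
    (hBessel : ∀ z > (0 : ℝ),
      (z : ℂ) ^ 2 * deriv (deriv f) z + (z : ℂ) * deriv f z
        - ((z : ℂ) ^ 2 + ν ^ 2) * f z = 0)
    (w : ℝ → ℂ)
    (hw : ∀ t : ℝ, w t = ((t : ℂ) ^ 2)⁻¹ * f ((1 / 2) * m₄ * t ^ 2)) :
    ∀ t > (0 : ℝ),
      deriv (deriv w) t + 5 * (t : ℂ)⁻¹ * deriv w t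
        + (m₁ : ℂ) * ((t : ℂ) ^ 2)⁻¹ * w t
        - (m₄ : ℂ) ^ 2 * (t : ℂ) ^ 2 * w t = 0 := by
  set g : ℝ → ℝ := fun s => 1 / 2 * m₄ * s ^ 2 with hg_def
  have hg : ∀ s : ℝ, HasDerivAt g (m₄ * s) s := by
    intro s
    have := ((hasDerivAt_pow 2 s).const_mul (1 / 2 * m₄))
    simpa [hg_def] using this.congr_deriv (by ring)
  have hgpos : ∀ s > (0 : ℝ), 0 < g s := by
    intro s hs
    simp only [hg_def]
    positivity
  have hweq : w = fun u : ℝ => ((u : ℂ) ^ 2)⁻¹ * f (g u) := funext hw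
  set W1 : ℝ → ℂ := fun s =>
    -2 * ((s : ℂ) ^ 3)⁻¹ * f (g s) + (m₄ : ℂ) * (s : ℂ)⁻¹ * deriv f (g s) with hW1_def
  have hcs : ∀ s : ℝ, HasDerivAt (fun u : ℝ => (u : ℂ)) 1 s := fun s => by
    exact HasDerivAt.ofReal_comp (hasDerivAt_id s) |>.congr_deriv (by simp)
  have hp2 : ∀ s : ℝ, HasDerivAt (fun u : ℝ => (u : ℂ) ^ 2) (2 * (s : ℂ)) s := by
    intro s
    have h := (hcs s).mul (hcs s)
    simp only [pow_two]
    refine h.congr_deriv ?_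
    ring
  have hp3 : ∀ s : ℝ, HasDerivAt (fun u : ℝ => (u : ℂ) ^ 3) (3 * (s : ℂ) ^ 2) s := by
    intro s
    have h := (hcs s).mul (hp2 s)
    have heq : (fun u : ℝ => (u : ℂ) ^ 3) = fun y : ℝ => (y : ℂ) * (y : ℂ) ^ 2 := by
      funext y; ring
    rw [heq]
    refine h.congr_deriv ?_
    ring
  have hinv2 : ∀ s : ℝ, (s : ℂ) ≠ 0 → HasDerivAt (fun u : ℝ => ((u : ℂ) ^ 2)⁻¹)
      (-(2 * (s : ℂ)) / ((s : ℂ) ^ 2) ^ 2) s := by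
    intro s hs
    have h := (hasDerivAt_inv (pow_ne_zero 2 hs)).scomp s (hp2 s)
    refine h.congr_deriv ?_
    rw [smul_eq_mul]
    field_simp
  have hinv3 : ∀ s : ℝ, (s : ℂ) ≠ 0 → HasDerivAt (fun u : ℝ => ((u : ℂ) ^ 3)⁻¹)
      (-(3 * (s : ℂ) ^ 2) / ((s : ℂ) ^ 3) ^ 2) s := by
    intro s hs
    have h := (hasDerivAt_inv (pow_ne_zero 3 hs)).scomp s (hp3 s)
    refine h.congr_deriv ?_
    rw [smul_eq_mul]
    field_simp
  have hinv1 : ∀ s : ℝ, (s : ℂ) ≠ 0 → HasDerivAt (fun u : ℝ => ((u : ℂ))⁻¹)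
      (-(1 : ℂ) / ((s : ℂ)) ^ 2) s := by
    intro s hs
    have h := (hasDerivAt_inv hs).scomp s (hcs s)
    refine h.congr_deriv ?_
    rw [smul_eq_mul]
    field_simp
  have hW1 : ∀ s > (0 : ℝ), HasDerivAt w (W1 s) s := by
    intro s hs
    have hsne : (s : ℂ) ≠ 0 := Complex.ofReal_ne_zero.mpr hs.ne'
    have hF : HasDerivAt (fun u : ℝ => f (g u)) ((m₄ * s) • deriv f (g s)) s :=
      ((hf (g s) (hgpos s hs)).hasDerivAt).scomp s (hg s)
    have h := (hinv2 s hsne).mul hF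
    rw [hweq]
    refine h.congr_deriv ?_
    simp only [hW1_def, Complex.real_smul]
    push_cast
    field_simp
  have hdw : ∀ s > (0 : ℝ), deriv w s = W1 s := fun s hs => (hW1 s hs).deriv
  intro t ht
  have htne : (t : ℂ) ≠ 0 := Complex.ofReal_ne_zero.mpr ht.ne'
  have hF : HasDerivAt (fun u : ℝ => f (g u)) ((m₄ * t) • deriv f (g t)) t :=
    ((hf (g t) (hgpos t ht)).hasDerivAt).scomp t (hg t)
  have hF' : HasDerivAt (fun u : ℝ => deriv f (g u)) ((m₄ * t) • deriv (deriv f) (g t)) t :=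
    ((hf' (g t) (hgpos t ht)).hasDerivAt).scomp t (hg t)
  have hW1' : HasDerivAt W1
      ((-2 * (-(3 * (t : ℂ) ^ 2) / ((t : ℂ) ^ 3) ^ 2)) * f (g t)
        + (-2 * ((t : ℂ) ^ 3)⁻¹) * ((m₄ * t) • deriv f (g t))
        + ((m₄ : ℂ) * (-(1 : ℂ) / ((t : ℂ)) ^ 2) * deriv f (g t)
          + (m₄ : ℂ) * (t : ℂ)⁻¹ * ((m₄ * t) • deriv (deriv f) (g t)))) t := by
    have h1 := ((hinv3 t htne).const_mul (-2 : ℂ)).mul hF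
    have h2 := ((hinv1 t htne).const_mul (m₄ : ℂ)).mul hF'
    have h := h1.add h2
    simp only [hW1_def]
    exact h
  have hdw2 : HasDerivAt (deriv w)
      ((-2 * (-(3 * (t : ℂ) ^ 2) / ((t : ℂ) ^ 3) ^ 2)) * f (g t)
        + (-2 * ((t : ℂ) ^ 3)⁻¹) * ((m₄ * t) • deriv f (g t))
        + ((m₄ : ℂ) * (-(1 : ℂ) / ((t : ℂ)) ^ 2) * deriv f (g t)
          + (m₄ : ℂ) * (t : ℂ)⁻¹ * ((m₄ * t) • deriv (deriv f) (g t)))) t := by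
    refine hW1'.congr_of_eventuallyEq ?_
    filter_upwards [isOpen_Ioi.mem_nhds (show t ∈ Set.Ioi (0:ℝ) from ht)] with s hs
    exact hdw s hs
  have hB := hBessel (g t) (hgpos t ht)
  have hgt : ((g t : ℝ) : ℂ) = 1 / 2 * (m₄ : ℂ) * (t : ℂ) ^ 2 := by
    simp only [hg_def]
    push_cast
    ring
  rw [hdw2.deriv, hdw t ht, hw t, hW1_def]
  rw [hgt] at hB
  have hg_eq : (1 / 2 * m₄ * t ^ 2 : ℝ) = g t := by rw [hg_def]
  rw [hg_eq]
  simp only [Complex.real_smul]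
  push_cast
  have hT : (t : ℂ) * (t : ℂ)⁻¹ = 1 := mul_inv_cancel₀ htne
  set T : ℂ := (t : ℂ)⁻¹ with hTdef
  linear_combination (4 * T ^ 4) * hB + (4 * T ^ 4 * f (g t)) * hν
    + ((6 * T ^ 4 * f (g t) + (m₄:ℂ) ^ 2 * (t:ℂ) ^ 2 * T ^ 2 * f (g t)) * ((t:ℂ) * T + 1)
       - 2 * (m₄:ℂ) * T ^ 2 * deriv f (g t) * ((t:ℂ) * T + 2)
       - (m₄:ℂ) ^ 2 * (t:ℂ) * T * deriv (deriv f) (g t)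
         * ((t:ℂ) ^ 2 * T ^ 2 + (t:ℂ) * T + 1)) * hT
end

section
/- Let m₁ ≥ 32/3 and m₂ > 0 be real constants and let w : (0,∞) → ℂ be twice continuously differentiable and satisfy w''(t) + 5 t⁻¹ w'(t) + m₁ t⁻² w(t) + m₂² t^(−2/3) w(t) = 0 for all t > 0. Then w(t) → 0 as t → ∞; and if w is not identically zero, then w is unbounded on (0,ε) for every ε > 0 (so the solutions diverge as t tends to zero). -/
set_option maxHeartbeats 1000000
open Set Filter

namespace TempEig

noncomputable def Qf (c m₂ t : ℝ) : ℝ := c * t ^ (-2:ℝ) + m₂^2 * t ^ (-2/3:ℝ)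
noncomputable def Qd (c m₂ t : ℝ) : ℝ := c * (-2) * t ^ (-3:ℝ) + m₂^2 * (-2/3) * t ^ (-5/3:ℝ)
noncomputable def vf (w : ℝ → ℂ) (t : ℝ) : ℂ := ((t ^ ((5:ℝ)/2) : ℝ) : ℂ) * w t
noncomputable def v1f (w : ℝ → ℂ) (t : ℝ) : ℂ :=
  ((5/2 * t ^ ((3:ℝ)/2) : ℝ) : ℂ) * w t + ((t ^ ((5:ℝ)/2) : ℝ) : ℂ) * deriv w t
noncomputable def Ef (c m₂ : ℝ) (w : ℝ → ℂ) (t : ℝ) : ℝ :=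
  (v1f w t).re^2 + (v1f w t).im^2 + Qf c m₂ t * ((vf w t).re^2 + (vf w t).im^2)

lemma rmul {t : ℝ} (ht : 0 < t) {p q r : ℝ} (h : p + q = r) : t ^ p * t ^ q = t ^ r := by
  rw [← Real.rpow_add ht, h]

lemma hasDerivAt_Q {c m₂ t : ℝ} (ht : 0 < t) : HasDerivAt (Qf c m₂) (Qd c m₂ t) t := by
  have h1 := (Real.hasDerivAt_rpow_const (x := t) (p := (-2:ℝ)) (Or.inl ht.ne')).const_mul c
  have h2 := (Real.hasDerivAt_rpow_const (x := t) (p := (-2/3:ℝ)) (Or.inl ht.ne')).const_mul (m₂^2)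
  have := h1.add h2
  refine this.congr_deriv ?_
  unfold Qd
  norm_num
  ring

lemma hasDerivAt_v {w : ℝ → ℂ} {t : ℝ} (ht : 0 < t) (hw : DifferentiableAt ℝ w t) :
    HasDerivAt (vf w) (v1f w t) t := by
  have hf : HasDerivAt (fun x : ℝ => x ^ ((5:ℝ)/2)) (5/2 * t ^ ((3:ℝ)/2)) t := by
    have h := Real.hasDerivAt_rpow_const (x := t) (p := (5:ℝ)/2) (Or.inl ht.ne')
    convert h using 1; norm_num
  exact (hf.ofReal_comp).mul hw.hasDerivAt

lemma hasDerivAt_v1 {m₁ m₂ : ℝ} {w : ℝ → ℂ} {t : ℝ} (ht : 0 < t)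
    (hw : DifferentiableAt ℝ w t) (hw' : DifferentiableAt ℝ (deriv w) t)
    (hode : deriv (deriv w) t + 5 * (t : ℂ)⁻¹ * deriv w t
        + (m₁ : ℂ) * ((t : ℂ) ^ 2)⁻¹ * w t
        + (m₂ : ℂ) ^ 2 * ((t ^ (-(2 : ℝ) / 3) : ℝ) : ℂ) * w t = 0) :
    HasDerivAt (v1f w) (((-(Qf (m₁ - 15/4) m₂ t) : ℝ) : ℂ) * vf w t) t := by
  have hf1 : HasDerivAt (fun x : ℝ => 5/2 * x ^ ((3:ℝ)/2)) (5/2 * (3/2 * t ^ ((1:ℝ)/2))) t := by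
    have h := (Real.hasDerivAt_rpow_const (x := t) (p := (3:ℝ)/2) (Or.inl ht.ne')).const_mul (5/2)
    refine h.congr_deriv ?_; norm_num
  have hf2 : HasDerivAt (fun x : ℝ => x ^ ((5:ℝ)/2)) (5/2 * t ^ ((3:ℝ)/2)) t := by
    have h := Real.hasDerivAt_rpow_const (x := t) (p := (5:ℝ)/2) (Or.inl ht.ne')
    convert h using 1; norm_num
  have base := ((hf1.ofReal_comp).mul hw.hasDerivAt).add ((hf2.ofReal_comp).mul hw'.hasDerivAt)
  refine base.congr_deriv (Eq.symm ?_)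
  -- algebraic identity
  have e1 : ((t:ℂ))⁻¹ = ((t ^ (-1:ℝ) : ℝ) : ℂ) := by rw [Real.rpow_neg_one]; push_cast; ring
  have e2 : (((t:ℂ)) ^ 2)⁻¹ = ((t ^ (-2:ℝ) : ℝ) : ℂ) := by
    rw [show (-2:ℝ) = -(2:ℕ) by norm_num, Real.rpow_neg ht.le, Real.rpow_natCast]
    push_cast; ring
  have e3 : (-(2:ℝ))/3 = (-2/3 : ℝ) := by norm_num
  rw [e1, e2, e3] at hode
  have hww : deriv (deriv w) t
      = -(5 * ((t ^ (-1:ℝ) : ℝ):ℂ) * deriv w t + (m₁:ℂ) * ((t ^ (-2:ℝ) : ℝ):ℂ) * w t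
          + (m₂:ℂ)^2 * ((t ^ (-2/3:ℝ) : ℝ):ℂ) * w t) := by linear_combination hode
  rw [hww]
  have c1 : ((t ^ ((5:ℝ)/2) : ℝ):ℂ) * ((t ^ (-1:ℝ) : ℝ):ℂ) = ((t ^ ((3:ℝ)/2) : ℝ):ℂ) := by
    rw [← Complex.ofReal_mul, rmul (r := (3:ℝ)/2) ht (by norm_num)]
  have c2 : ((t ^ ((5:ℝ)/2) : ℝ):ℂ) * ((t ^ (-2:ℝ) : ℝ):ℂ) = ((t ^ ((1:ℝ)/2) : ℝ):ℂ) := by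
    rw [← Complex.ofReal_mul, rmul (r := (1:ℝ)/2) ht (by norm_num)]
  have c3 : ((t ^ ((5:ℝ)/2) : ℝ):ℂ) * ((t ^ (-2/3:ℝ) : ℝ):ℂ) = ((t ^ ((11:ℝ)/6) : ℝ):ℂ) := by
    rw [← Complex.ofReal_mul, rmul (r := (11:ℝ)/6) ht (by norm_num)]
  unfold Qf vf
  push_cast
  linear_combination (5 * deriv w t) * c1 + (15/4 : ℂ) * (w t) * c2


lemma sq_re_im (z : ℂ) : z.re^2 + z.im^2 = ‖z‖^2 := by
  rw [Complex.sq_norm, Complex.normSq_apply]; ring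

lemma norm_vf {w : ℝ → ℂ} {t : ℝ} (ht : 0 ≤ t) : ‖vf w t‖ = t ^ ((5:ℝ)/2) * ‖w t‖ := by
  rw [vf, norm_mul, Complex.norm_real, Real.norm_eq_abs, abs_of_nonneg (Real.rpow_nonneg ht _)]

lemma normsq_vf {w : ℝ → ℂ} {t : ℝ} (ht : 0 ≤ t) :
    (vf w t).re^2 + (vf w t).im^2 = (t ^ ((5:ℝ)/2))^2 * ‖w t‖^2 := by
  rw [sq_re_im, norm_vf ht, mul_pow]

lemma Qf_pos {c m₂ t : ℝ} (hc : 0 < c) (ht : 0 < t) : 0 < Qf c m₂ t := by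
  have h1 := Real.rpow_pos_of_pos ht (-2:ℝ)
  have h2 := Real.rpow_nonneg ht.le (-2/3:ℝ)
  unfold Qf; nlinarith [sq_nonneg m₂]


lemma hasDerivAt_re_v {w : ℝ → ℂ} {t : ℝ} (ht : 0 < t) (hwt : DifferentiableAt ℝ w t) :
    HasDerivAt (fun s => (vf w s).re) ((v1f w t).re) t := by
  simpa [Function.comp_def] using Complex.reCLM.hasFDerivAt.comp_hasDerivAt t (hasDerivAt_v ht hwt)

lemma hasDerivAt_im_v {w : ℝ → ℂ} {t : ℝ} (ht : 0 < t) (hwt : DifferentiableAt ℝ w t) :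
    HasDerivAt (fun s => (vf w s).im) ((v1f w t).im) t := by
  simpa [Function.comp_def] using Complex.imCLM.hasFDerivAt.comp_hasDerivAt t (hasDerivAt_v ht hwt)

lemma hasDerivAt_re_v1 {m₁ m₂ : ℝ} {w : ℝ → ℂ} {t : ℝ} (ht : 0 < t)
    (hwt : DifferentiableAt ℝ w t) (hwt' : DifferentiableAt ℝ (deriv w) t)
    (hode : deriv (deriv w) t + 5 * (t : ℂ)⁻¹ * deriv w t
        + (m₁ : ℂ) * ((t : ℂ) ^ 2)⁻¹ * w t
        + (m₂ : ℂ) ^ 2 * ((t ^ (-(2 : ℝ) / 3) : ℝ) : ℂ) * w t = 0) :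
    HasDerivAt (fun s => (v1f w s).re) (-(Qf (m₁ - 15/4) m₂ t) * (vf w t).re) t := by
  have h := Complex.reCLM.hasFDerivAt.comp_hasDerivAt t (hasDerivAt_v1 ht hwt hwt' hode)
  simpa [Complex.re_ofReal_mul, Function.comp_def] using h

lemma hasDerivAt_im_v1 {m₁ m₂ : ℝ} {w : ℝ → ℂ} {t : ℝ} (ht : 0 < t)
    (hwt : DifferentiableAt ℝ w t) (hwt' : DifferentiableAt ℝ (deriv w) t)
    (hode : deriv (deriv w) t + 5 * (t : ℂ)⁻¹ * deriv w t
        + (m₁ : ℂ) * ((t : ℂ) ^ 2)⁻¹ * w t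
        + (m₂ : ℂ) ^ 2 * ((t ^ (-(2 : ℝ) / 3) : ℝ) : ℂ) * w t = 0) :
    HasDerivAt (fun s => (v1f w s).im) (-(Qf (m₁ - 15/4) m₂ t) * (vf w t).im) t := by
  have h := Complex.imCLM.hasFDerivAt.comp_hasDerivAt t (hasDerivAt_v1 ht hwt hwt' hode)
  simpa [Complex.im_ofReal_mul, Function.comp_def] using h

lemma hasDerivAt_E (m₁ m₂ : ℝ) (w : ℝ → ℂ)
    (hw : ∀ t > (0:ℝ), DifferentiableAt ℝ w t)
    (hw' : ∀ t > (0:ℝ), DifferentiableAt ℝ (deriv w) t)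
    (hODE : ∀ t > (0:ℝ), deriv (deriv w) t + 5 * (t : ℂ)⁻¹ * deriv w t
        + (m₁ : ℂ) * ((t : ℂ) ^ 2)⁻¹ * w t
        + (m₂ : ℂ) ^ 2 * ((t ^ (-(2 : ℝ) / 3) : ℝ) : ℂ) * w t = 0)
    {t : ℝ} (ht : 0 < t) :
    HasDerivAt (Ef (m₁ - 15/4) m₂ w)
      (Qd (m₁ - 15/4) m₂ t * ((vf w t).re^2 + (vf w t).im^2)) t := by
  have ha := hasDerivAt_re_v ht (hw t ht)
  have hb := hasDerivAt_im_v ht (hw t ht)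
  have ha1 := hasDerivAt_re_v1 ht (hw t ht) (hw' t ht) (hODE t ht)
  have hb1 := hasDerivAt_im_v1 ht (hw t ht) (hw' t ht) (hODE t ht)
  have hQ := hasDerivAt_Q (c := m₁ - 15/4) (m₂ := m₂) ht
  have hE := ((ha1.pow 2).add (hb1.pow 2)).add (hQ.mul ((ha.pow 2).add (hb.pow 2)))
  unfold Ef
  refine hE.congr_deriv (Eq.symm ?_)
  simp only [pow_one, Nat.cast_ofNat, Pi.add_apply, Pi.pow_apply]
  ring

lemma E_antitone (m₁ m₂ : ℝ) (hm₁ : 32/3 ≤ m₁) (w : ℝ → ℂ)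
    (hw : ∀ t > (0:ℝ), DifferentiableAt ℝ w t)
    (hw' : ∀ t > (0:ℝ), DifferentiableAt ℝ (deriv w) t)
    (hODE : ∀ t > (0:ℝ), deriv (deriv w) t + 5 * (t : ℂ)⁻¹ * deriv w t
        + (m₁ : ℂ) * ((t : ℂ) ^ 2)⁻¹ * w t
        + (m₂ : ℂ) ^ 2 * ((t ^ (-(2 : ℝ) / 3) : ℝ) : ℂ) * w t = 0) :
    AntitoneOn (Ef (m₁ - 15/4) m₂ w) (Ioi 0) := by
  apply antitoneOn_of_deriv_nonpos (convex_Ioi 0)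
  · exact fun x hx => (hasDerivAt_E m₁ m₂ w hw hw' hODE hx).continuousAt.continuousWithinAt
  · rw [interior_Ioi]
    exact fun x hx => (hasDerivAt_E m₁ m₂ w hw hw' hODE hx).differentiableAt.differentiableWithinAt
  · rw [interior_Ioi]
    intro x hx
    rw [(hasDerivAt_E m₁ m₂ w hw hw' hODE hx).deriv]
    have h3 := Real.rpow_pos_of_pos hx (-3:ℝ)
    have h53 := Real.rpow_pos_of_pos hx (-5/3:ℝ)
    have hQd : Qd (m₁ - 15/4) m₂ x ≤ 0 := by unfold Qd; nlinarith [sq_nonneg m₂]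
    exact mul_nonpos_of_nonpos_of_nonneg hQd (by positivity)

lemma part1 (m₁ m₂ : ℝ) (hm₁ : 32/3 ≤ m₁) (hm₂ : 0 < m₂) (w : ℝ → ℂ)
    (hw : ∀ t > (0:ℝ), DifferentiableAt ℝ w t)
    (hw' : ∀ t > (0:ℝ), DifferentiableAt ℝ (deriv w) t)
    (hODE : ∀ t > (0:ℝ), deriv (deriv w) t + 5 * (t : ℂ)⁻¹ * deriv w t
        + (m₁ : ℂ) * ((t : ℂ) ^ 2)⁻¹ * w t
        + (m₂ : ℂ) ^ 2 * ((t ^ (-(2 : ℝ) / 3) : ℝ) : ℂ) * w t = 0) :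
    Tendsto w atTop (nhds 0) := by
  have hcnn : (0:ℝ) ≤ m₁ - 15/4 := by linarith
  have hanti := E_antitone m₁ m₂ hm₁ w hw hw' hODE
  set c := m₁ - 15/4 with hcdef
  set K := max (Ef c m₂ w 1) 0 / m₂^2 with hKdef
  have hK0 : 0 ≤ K := div_nonneg (le_max_right _ _) (sq_nonneg _)
  have key : ∀ t : ℝ, 1 ≤ t → ‖w t‖ ≤ Real.sqrt K * t ^ (-(13/6) : ℝ) := by
    intro t ht1
    have ht : (0:ℝ) < t := lt_of_lt_of_le one_pos ht1
    have hEle : Ef c m₂ w t ≤ Ef c m₂ w 1 :=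
      hanti (mem_Ioi.mpr one_pos) (mem_Ioi.mpr ht) ht1
    have hlow : m₂^2 * t ^ (-2/3:ℝ) * ((t ^ ((5:ℝ)/2))^2 * ‖w t‖^2) ≤ Ef c m₂ w t := by
      rw [← normsq_vf ht.le]
      unfold Ef Qf
      have h2 := Real.rpow_nonneg ht.le (-2:ℝ)
      set q2 := t ^ (-2:ℝ)
      set q23 := t ^ (-2/3:ℝ)
      nlinarith [sq_nonneg (v1f w t).re, sq_nonneg (v1f w t).im,
        mul_nonneg (mul_nonneg hcnn h2)
          (add_nonneg (sq_nonneg (vf w t).re) (sq_nonneg (vf w t).im))]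
    have hcomb : t ^ (-2/3:ℝ) * (t ^ ((5:ℝ)/2))^2 = t ^ ((13:ℝ)/3) := by
      rw [sq, rmul (r := (5:ℝ)) ht (by norm_num), rmul (r := (13:ℝ)/3) ht (by norm_num)]
    have hX : m₂^2 * (t ^ ((13:ℝ)/3) * ‖w t‖^2) ≤ K * m₂^2 := by
      have h1 : K * m₂^2 = max (Ef c m₂ w 1) 0 := by
        rw [hKdef]; field_simp
      rw [h1]
      calc m₂^2 * (t ^ ((13:ℝ)/3) * ‖w t‖^2)
          = m₂^2 * t ^ (-2/3:ℝ) * ((t ^ ((5:ℝ)/2))^2 * ‖w t‖^2) := by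
            rw [← hcomb]; ring
        _ ≤ Ef c m₂ w t := hlow
        _ ≤ Ef c m₂ w 1 := hEle
        _ ≤ max (Ef c m₂ w 1) 0 := le_max_left _ _
    have hXX : t ^ ((13:ℝ)/3) * ‖w t‖^2 ≤ K :=
      le_of_mul_le_mul_left
        (by linarith : m₂^2 * (t ^ ((13:ℝ)/3) * ‖w t‖^2) ≤ m₂^2 * K) (pow_pos hm₂ 2)
    have hsq : ‖w t‖^2 ≤ K * t ^ (-(13/3) : ℝ) := by
      have h1 : t ^ ((13:ℝ)/3) * t ^ (-(13/3):ℝ) = 1 := by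
        rw [rmul (r := (0:ℝ)) ht (by norm_num), Real.rpow_zero]
      have h2 := Real.rpow_pos_of_pos ht (-(13/3):ℝ)
      nlinarith [hXX, h2, Real.rpow_pos_of_pos ht ((13:ℝ)/3)]
    have := Real.sqrt_le_sqrt hsq
    rw [Real.sqrt_sq (norm_nonneg _)] at this
    refine this.trans (le_of_eq ?_)
    rw [Real.sqrt_mul hK0, Real.sqrt_eq_rpow (t ^ (-(13/3):ℝ)), ← Real.rpow_mul ht.le]
    norm_num
  have htends : Tendsto (fun t:ℝ => Real.sqrt K * t ^ (-(13/6) : ℝ)) atTop (nhds 0) := by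
    have h := (tendsto_rpow_neg_atTop (y := (13/6:ℝ)) (by norm_num)).const_mul (Real.sqrt K)
    simpa using h
  rw [tendsto_zero_iff_norm_tendsto_zero]
  exact squeeze_zero' (Eventually.of_forall fun t => norm_nonneg _)
    (eventually_atTop.mpr ⟨1, key⟩) htends

lemma part2 (m₁ m₂ : ℝ) (hm₁ : 32/3 ≤ m₁) (hm₂ : 0 < m₂) (w : ℝ → ℂ)
    (hw : ∀ t > (0:ℝ), DifferentiableAt ℝ w t)
    (hw' : ∀ t > (0:ℝ), DifferentiableAt ℝ (deriv w) t)
    (hODE : ∀ t > (0:ℝ), deriv (deriv w) t + 5 * (t : ℂ)⁻¹ * deriv w t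
        + (m₁ : ℂ) * ((t : ℂ) ^ 2)⁻¹ * w t
        + (m₂ : ℂ) ^ 2 * ((t ^ (-(2 : ℝ) / 3) : ℝ) : ℂ) * w t = 0)
    {T ε : ℝ} (hT : 0 < T) (hwT : w T ≠ 0) (hε : 0 < ε)
    (hbdd : BddAbove ((fun t => ‖w t‖) '' Ioo 0 ε)) : False := by
  have hcpos : (0:ℝ) < m₁ - 15/4 := by linarith
  have hanti := E_antitone m₁ m₂ hm₁ w hw hw' hODE
  set c := m₁ - 15/4 with hcdef
  obtain ⟨M0, hM0⟩ := hbdd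
  set M := max M0 0 with hMdef
  have hMnn : (0:ℝ) ≤ M := le_max_right _ _
  have hM : ∀ s, 0 < s → s < ε → ‖w s‖ ≤ M := fun s h1 h2 =>
    le_trans (hM0 ⟨s, ⟨h1, h2⟩, rfl⟩) (le_max_left _ _)
  have hvb : ∀ s, 0 < s → s < ε → ‖vf w s‖ ≤ M * s ^ ((5:ℝ)/2) := by
    intro s h1 h2
    rw [norm_vf h1.le, mul_comm (s ^ ((5:ℝ)/2))]
    exact mul_le_mul_of_nonneg_right (hM s h1 h2) (Real.rpow_nonneg h1.le _)
  have hre : ∀ s, 0 < s → s < ε → |(vf w s).re| ≤ M * s ^ ((5:ℝ)/2) := by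
    intro s h1 h2
    have h := hvb s h1 h2
    exact (Complex.abs_re_le_norm _).trans h
  have him : ∀ s, 0 < s → s < ε → |(vf w s).im| ≤ M * s ^ ((5:ℝ)/2) := by
    intro s h1 h2
    have h := hvb s h1 h2
    exact (Complex.abs_im_le_norm _).trans h
  set δ := min ε T with hδdef
  have hδpos : 0 < δ := lt_min hε hT
  have hδε : δ ≤ ε := min_le_left _ _
  have hδT : δ ≤ T := min_le_right _ _
  set B : ℝ → ℝ := fun t => (4*M*t^((3:ℝ)/2))^2
      + (4*M*t^((3:ℝ)/2) + M*(c*t^((1:ℝ)/2)+m₂^2*t^((11:ℝ)/6))*t)^2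
      + M^2*(c*t^((3:ℝ))+m₂^2*t^((13:ℝ)/3)) with hBdef
  have key : ∀ t, 0 < t → t < δ → Ef c m₂ w T ≤ B t := by
    intro t h0t htδ
    have htε : t < ε := lt_of_lt_of_le htδ hδε
    have h2pos : 0 < t/2 := by linarith
    have hcontre : ContinuousOn (fun s => (vf w s).re) (Icc (t/2) t) := by
      intro x hx
      have hx0 : 0 < x := lt_of_lt_of_le h2pos hx.1
      exact (hasDerivAt_re_v hx0 (hw x hx0)).continuousAt.continuousWithinAt
    have hcontim : ContinuousOn (fun s => (vf w s).im) (Icc (t/2) t) := by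
      intro x hx
      have hx0 : 0 < x := lt_of_lt_of_le h2pos hx.1
      exact (hasDerivAt_im_v hx0 (hw x hx0)).continuousAt.continuousWithinAt
    obtain ⟨ξ, hξmem, hξeq⟩ := exists_hasDerivAt_eq_slope (fun s => (vf w s).re)
      (fun s => (v1f w s).re) (by linarith : t/2 < t) hcontre
      (fun x hx => hasDerivAt_re_v (lt_trans h2pos hx.1) (hw x (lt_trans h2pos hx.1)))
    obtain ⟨η, hηmem, hηeq⟩ := exists_hasDerivAt_eq_slope (fun s => (vf w s).im)
      (fun s => (v1f w s).im) (by linarith : t/2 < t) hcontim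
      (fun x hx => hasDerivAt_im_v (lt_trans h2pos hx.1) (hw x (lt_trans h2pos hx.1)))
    have hξ0 : 0 < ξ := lt_trans h2pos hξmem.1
    have hξε : ξ < ε := lt_trans hξmem.2 htε
    have hη0 : 0 < η := lt_trans h2pos hηmem.1
    have hηε : η < ε := lt_trans hηmem.2 htε
    have ht52 : t ^ ((5:ℝ)/2) = t ^ ((3:ℝ)/2) * t := by
      have h := rmul (t := t) h0t (p := (3:ℝ)/2) (q := 1) (r := (5:ℝ)/2) (by norm_num)
      rw [Real.rpow_one] at h; exact h.symm
    have hslopea : |(v1f w ξ).re| ≤ 4*M*t^((3:ℝ)/2) := by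
      rw [hξeq, show t - t/2 = t/2 by ring, abs_div, abs_of_pos h2pos, div_le_iff₀ h2pos]
      have h1 := hre t h0t htε
      have h2 := hre (t/2) h2pos (by linarith)
      have h3 : (t/2) ^ ((5:ℝ)/2) ≤ t ^ ((5:ℝ)/2) :=
        Real.rpow_le_rpow h2pos.le (by linarith) (by norm_num)
      calc |(vf w t).re - (vf w (t/2)).re| ≤ |(vf w t).re| + |(vf w (t/2)).re| := abs_sub _ _
        _ ≤ 2*(M*t^((5:ℝ)/2)) := by linarith [mul_le_mul_of_nonneg_left h3 hMnn]
        _ = 4*M*t^((3:ℝ)/2)*(t/2) := by rw [ht52]; ring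
    have hslopeb : |(v1f w η).im| ≤ 4*M*t^((3:ℝ)/2) := by
      rw [hηeq, show t - t/2 = t/2 by ring, abs_div, abs_of_pos h2pos, div_le_iff₀ h2pos]
      have h1 := him t h0t htε
      have h2 := him (t/2) h2pos (by linarith)
      have h3 : (t/2) ^ ((5:ℝ)/2) ≤ t ^ ((5:ℝ)/2) :=
        Real.rpow_le_rpow h2pos.le (by linarith) (by norm_num)
      calc |(vf w t).im - (vf w (t/2)).im| ≤ |(vf w t).im| + |(vf w (t/2)).im| := abs_sub _ _
        _ ≤ 2*(M*t^((5:ℝ)/2)) := by linarith [mul_le_mul_of_nonneg_left h3 hMnn]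
        _ = 4*M*t^((3:ℝ)/2)*(t/2) := by rw [ht52]; ring
    set Kt := M*(c*t^((1:ℝ)/2)+m₂^2*t^((11:ℝ)/6)) with hKt
    have hKt0 : 0 ≤ Kt := by
      rw [hKt]
      exact mul_nonneg hMnn (add_nonneg (mul_nonneg hcpos.le (Real.rpow_nonneg h0t.le _))
        (mul_nonneg (sq_nonneg m₂) (Real.rpow_nonneg h0t.le _)))
    have hdiff : ∀ x ∈ Ioo (0:ℝ) t, DifferentiableAt ℝ (fun s => (v1f w s).im) x := fun x hx =>
      (hasDerivAt_im_v1 hx.1 (hw x hx.1) (hw' x hx.1) (hODE x hx.1)).differentiableAt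
    have hdb : ∀ x ∈ Ioo (0:ℝ) t, ‖deriv (fun s => (v1f w s).im) x‖ ≤ Kt := by
      intro x hx
      rw [(hasDerivAt_im_v1 hx.1 (hw x hx.1) (hw' x hx.1) (hODE x hx.1)).deriv,
        Real.norm_eq_abs, abs_mul, abs_neg, abs_of_pos (Qf_pos hcpos hx.1)]
      have hxε : x < ε := lt_trans hx.2 htε
      have h1 := him x hx.1 hxε
      have e1 : x ^ (-2:ℝ) * x ^ ((5:ℝ)/2) = x ^ ((1:ℝ)/2) := rmul hx.1 (by norm_num)
      have e2 : x ^ (-2/3:ℝ) * x ^ ((5:ℝ)/2) = x ^ ((11:ℝ)/6) := rmul hx.1 (by norm_num)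
      calc Qf c m₂ x * |(vf w x).im|
          ≤ Qf c m₂ x * (M * x ^ ((5:ℝ)/2)) :=
            mul_le_mul_of_nonneg_left h1 (Qf_pos hcpos hx.1).le
        _ = M * (c * x^((1:ℝ)/2) + m₂^2 * x^((11:ℝ)/6)) := by
            unfold Qf
            linear_combination M * c * e1 + M * m₂^2 * e2
        _ ≤ Kt := by
            have e3 : x^((1:ℝ)/2) ≤ t^((1:ℝ)/2) :=
              Real.rpow_le_rpow hx.1.le hx.2.le (by norm_num)
            have e4 : x^((11:ℝ)/6) ≤ t^((11:ℝ)/6) :=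
              Real.rpow_le_rpow hx.1.le hx.2.le (by norm_num)
            rw [hKt]
            exact mul_le_mul_of_nonneg_left (add_le_add
              (mul_le_mul_of_nonneg_left e3 hcpos.le)
              (mul_le_mul_of_nonneg_left e4 (sq_nonneg m₂))) hMnn
    have hlip := Convex.norm_image_sub_le_of_norm_deriv_le hdiff hdb (convex_Ioo 0 t)
      (⟨hη0, hηmem.2⟩ : η ∈ Ioo (0:ℝ) t) (⟨hξ0, hξmem.2⟩ : ξ ∈ Ioo (0:ℝ) t)
    have hdist : |ξ - η| ≤ t := by
      have h1 := hξmem.1; have h2 := hξmem.2; have h3 := hηmem.1; have h4 := hηmem.2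
      rw [abs_le]
      exact ⟨by linarith, by linarith⟩
    have hb1ξ : |(v1f w ξ).im| ≤ 4*M*t^((3:ℝ)/2) + Kt * t := by
      have h6 : |(v1f w ξ).im - (v1f w η).im| ≤ Kt * t := by
        have h7 : |(v1f w ξ).im - (v1f w η).im| ≤ Kt * |ξ - η| := by
          simpa [Real.norm_eq_abs] using hlip
        exact h7.trans (mul_le_mul_of_nonneg_left hdist hKt0)
      have h5 := abs_sub_abs_le_abs_sub ((v1f w ξ).im) ((v1f w η).im)
      linarith
    have hpot : Qf c m₂ ξ * ((vf w ξ).re^2 + (vf w ξ).im^2)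
        ≤ M^2 * (c*t^((3:ℝ)) + m₂^2*t^((13:ℝ)/3)) := by
      rw [normsq_vf hξ0.le]
      have e0 : (ξ ^ ((5:ℝ)/2))^2 = ξ ^ ((5:ℝ)) := by rw [sq, rmul (r := (5:ℝ)) hξ0 (by norm_num)]
      rw [e0]
      have hw2 : ‖w ξ‖^2 ≤ M^2 := by nlinarith [hM ξ hξ0 hξε, norm_nonneg (w ξ)]
      have e1 : ξ ^ (-2:ℝ) * ξ ^ ((5:ℝ)) = ξ ^ ((3:ℝ)) := rmul hξ0 (by norm_num)
      have e2 : ξ ^ (-2/3:ℝ) * ξ ^ ((5:ℝ)) = ξ ^ ((13:ℝ)/3) := rmul hξ0 (by norm_num)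
      have e3 : ξ ^ ((3:ℝ)) ≤ t ^ ((3:ℝ)) :=
        Real.rpow_le_rpow hξ0.le hξmem.2.le (by norm_num)
      have e4 : ξ ^ ((13:ℝ)/3) ≤ t ^ ((13:ℝ)/3) :=
        Real.rpow_le_rpow hξ0.le hξmem.2.le (by norm_num)
      have hnn : 0 ≤ c*ξ^((3:ℝ)) + m₂^2*ξ^((13:ℝ)/3) :=
        add_nonneg (mul_nonneg hcpos.le (Real.rpow_nonneg hξ0.le _))
          (mul_nonneg (sq_nonneg m₂) (Real.rpow_nonneg hξ0.le _))
      calc Qf c m₂ ξ * (ξ ^ ((5:ℝ)) * ‖w ξ‖^2)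
          = (c*ξ^((3:ℝ)) + m₂^2*ξ^((13:ℝ)/3)) * ‖w ξ‖^2 := by
            unfold Qf
            linear_combination (‖w ξ‖^2 * c) * e1 + (‖w ξ‖^2 * m₂^2) * e2
        _ ≤ (c*t^((3:ℝ)) + m₂^2*t^((13:ℝ)/3)) * M^2 := by
            apply mul_le_mul _ hw2 (sq_nonneg _) _
            · exact add_le_add (mul_le_mul_of_nonneg_left e3 hcpos.le)
                (mul_le_mul_of_nonneg_left e4 (sq_nonneg m₂))
            · exact add_nonneg (mul_nonneg hcpos.le (Real.rpow_nonneg h0t.le _))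
                (mul_nonneg (sq_nonneg m₂) (Real.rpow_nonneg h0t.le _))
        _ = M^2 * (c*t^((3:ℝ)) + m₂^2*t^((13:ℝ)/3)) := by ring
    have hEξ : Ef c m₂ w ξ ≤ B t := by
      have s1 : (v1f w ξ).re^2 ≤ (4*M*t^((3:ℝ)/2))^2 := by
        rw [← sq_abs]
        exact pow_le_pow_left₀ (abs_nonneg _) hslopea 2
      have s2 : (v1f w ξ).im^2 ≤ (4*M*t^((3:ℝ)/2) + Kt*t)^2 := by
        rw [← sq_abs]
        exact pow_le_pow_left₀ (abs_nonneg _) hb1ξ 2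
      have hBt_eq : B t = (4*M*t^((3:ℝ)/2))^2 + (4*M*t^((3:ℝ)/2) + Kt*t)^2
          + M^2*(c*t^((3:ℝ)) + m₂^2*t^((13:ℝ)/3)) := by
        rw [hKt]
      rw [hBt_eq]
      unfold Ef
      linarith
    have hξT : ξ ≤ T := le_of_lt (lt_of_lt_of_le (lt_trans hξmem.2 htδ) hδT)
    exact le_trans (hanti (mem_Ioi.mpr hξ0) (mem_Ioi.mpr hT) hξT) hEξ
  have hBcont : ContinuousAt B 0 := by
    rw [hBdef]
    have c32 := Real.continuousAt_rpow_const 0 ((3:ℝ)/2) (Or.inr (by norm_num))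
    have c12 := Real.continuousAt_rpow_const 0 ((1:ℝ)/2) (Or.inr (by norm_num))
    have c116 := Real.continuousAt_rpow_const 0 ((11:ℝ)/6) (Or.inr (by norm_num))
    have c3 := Real.continuousAt_rpow_const 0 ((3:ℝ)) (Or.inr (by norm_num))
    have c133 := Real.continuousAt_rpow_const 0 ((13:ℝ)/3) (Or.inr (by norm_num))
    exact (((continuousAt_const.mul c32).pow 2).add
      (((continuousAt_const.mul c32).add
        ((continuousAt_const.mul ((continuousAt_const.mul c12).add
          (continuousAt_const.mul c116))).mul continuousAt_id)).pow 2)).add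
      (continuousAt_const.mul ((continuousAt_const.mul c3).add (continuousAt_const.mul c133)))
  have hB0 : B 0 = 0 := by
    rw [hBdef]
    norm_num [Real.zero_rpow]
  have hBt : Tendsto B (nhdsWithin (0:ℝ) (Ioi 0)) (nhds 0) := by
    have h := hBcont.tendsto
    rw [hB0] at h
    exact h.mono_left nhdsWithin_le_nhds
  have hev : ∀ᶠ t in nhdsWithin (0:ℝ) (Ioi 0), Ef c m₂ w T ≤ B t := by
    filter_upwards [Ioo_mem_nhdsGT_of_mem (Set.left_mem_Ico.mpr hδpos)] with t ht2
    exact key t ht2.1 ht2.2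
  have hET : Ef c m₂ w T ≤ 0 := ge_of_tendsto hBt hev
  have hQT := Qf_pos (c := c) (m₂ := m₂) hcpos hT
  have hvT : 0 < (vf w T).re^2 + (vf w T).im^2 := by
    rw [normsq_vf hT.le]
    exact mul_pos (pow_pos (Real.rpow_pos_of_pos hT _) 2)
      (pow_pos (norm_pos_iff.mpr hwT) 2)
  have hEpos : 0 < Ef c m₂ w T := by
    unfold Ef
    nlinarith [sq_nonneg (v1f w T).re, sq_nonneg (v1f w T).im, mul_pos hQT hvT]
  linarith

end TempEig

/-- Any twice continuously differentiable solution of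
`w'' + 5 t⁻¹ w' + m₁ t⁻² w + m₂² t^(-2/3) w = 0` on `(0,∞)` (with `m₁ ≥ 32/3`,
`m₂ > 0`) converges to `0` as `t → ∞`, and, if it is not identically zero,
it is unbounded on `(0,ε)` for every `ε > 0`. -/
theorem temporal_eigenfunction_asymptotics_m3_zero
    (m₁ m₂ : ℝ) (hm₁ : 32 / 3 ≤ m₁) (hm₂ : 0 < m₂)
    (w : ℝ → ℂ)
    (hw : ∀ t > (0 : ℝ), DifferentiableAt ℝ w t)
    (hw' : ∀ t > (0 : ℝ), DifferentiableAt ℝ (deriv w) t)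
    (hw'' : ContinuousOn (deriv (deriv w)) (Set.Ioi 0))
    (hODE : ∀ t > (0 : ℝ),
      deriv (deriv w) t + 5 * (t : ℂ)⁻¹ * deriv w t
        + (m₁ : ℂ) * ((t : ℂ) ^ 2)⁻¹ * w t
        + (m₂ : ℂ) ^ 2 * ((t ^ (-(2 : ℝ) / 3) : ℝ) : ℂ) * w t = 0) :
    Filter.Tendsto w Filter.atTop (nhds 0) ∧
    ((∃ t > (0 : ℝ), w t ≠ 0) →
      ∀ ε > (0 : ℝ), ¬ BddAbove ((fun t => ‖w t‖) '' Set.Ioo 0 ε)) := by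
  constructor
  · exact TempEig.part1 m₁ m₂ hm₁ hm₂ w hw hw' hODE
  · rintro ⟨T, hT, hwT⟩ ε hε hbdd
    exact TempEig.part2 m₁ m₂ hm₁ hm₂ w hw hw' hODE hT hwT hε hbdd
end

section
/- (Iwasawa decomposition of SL(n,ℝ)): Let n ≥ 1 and let g be a real n×n matrix with det g = 1. Then there exist unique matrices N, A, K such that g = N·A·K, where N is upper triangular with all diagonal entries equal to 1, A is a diagonal matrix with strictly positive diagonal entries and det A = 1, and K is orthogonal (Kᵀ·K = 1) with det K = 1. -/
open Matrix Finset
open scoped ComplexOrder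

instance (n : ℕ) : WellFoundedLT (Fin n)ᵒᵈ := Finite.to_wellFoundedLT

/-- Diagonal entries of `LDL.lowerInv` are 1. -/
lemma lowerInv_diag_one {𝕜 : Type*} [RCLike 𝕜] {ι : Type*} [LinearOrder ι]
    [WellFoundedLT ι] [LocallyFiniteOrderBot ι] [Fintype ι]
    {S : Matrix ι ι 𝕜} (hS : S.PosDef) (i : ι) : LDL.lowerInv hS i i = 1 := by
  letI := Sᵀ.toNormedAddCommGroup hS.transpose
  letI := Sᵀ.toInnerProductSpace hS.transpose.posSemidef
  have h := InnerProductSpace.gramSchmidt_def'' 𝕜 (⇑(Pi.basisFun 𝕜 ι)) i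
  have h2 := congrArg (fun v => (Pi.basisFun 𝕜 ι).repr v i) h
  simp only [map_add, map_sum, _root_.map_smul, Finsupp.add_apply, Finsupp.smul_apply,
    Finset.sum_apply', Pi.basisFun_repr, Pi.basisFun_apply, Pi.single_eq_same,
    smul_eq_mul] at h2
  rw [Finset.sum_eq_zero (fun j hj => ?_)] at h2
  · have h3 : LDL.lowerInv hS i i = InnerProductSpace.gramSchmidt 𝕜 (⇑(Pi.basisFun 𝕜 ι)) i i := rfl
    rw [add_zero] at h2; rw [h3, ← h2]
  · have h0 : (Pi.basisFun 𝕜 ι).repr (InnerProductSpace.gramSchmidt 𝕜 (⇑(Pi.basisFun 𝕜 ι)) j) i = 0 :=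
      InnerProductSpace.gramSchmidt_triangular (Finset.mem_Iio.mp hj) (Pi.basisFun 𝕜 ι)
    rw [Pi.basisFun_repr] at h0
    rw [h0, mul_zero]

/-- Diagonal entry of product of two upper triangular matrices. -/
lemma upper_mul_diag {ι : Type*} [Fintype ι] [LinearOrder ι] {P Q : Matrix ι ι ℝ}
    (hP : P.BlockTriangular id) (hQ : Q.BlockTriangular id) (i : ι) :
    (P * Q) i i = P i i * Q i i := by
  rw [Matrix.mul_apply]
  refine Finset.sum_eq_single i (fun k _ hk => ?_) (fun h => absurd (Finset.mem_univ i) h)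
  rcases hk.lt_or_gt with h | h
  · rw [hP (show id k < id i from h), zero_mul]
  · rw [hQ (show id i < id k from h), mul_zero]

lemma upper_inv_diag_one {ι : Type*} [Fintype ι] [LinearOrder ι] [DecidableEq ι]
    {M : Matrix ι ι ℝ} (hM : M.BlockTriangular id) (hd : ∀ i, M i i = 1)
    [Invertible M] (i : ι) : M⁻¹ i i = 1 := by
  have hMi : M⁻¹.BlockTriangular id := Matrix.blockTriangular_inv_of_blockTriangular hM
  have h := upper_mul_diag hM hMi i
  rw [Matrix.mul_inv_of_invertible, Matrix.one_apply_eq, hd, one_mul] at h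
  exact h.symm

/-- Uniqueness part of the Iwasawa decomposition. -/
lemma iwasawa_unique {n : ℕ} (N₁ A₁ K₁ N₂ A₂ K₂ : Matrix (Fin n) (Fin n) ℝ)
    (hN₁t : ∀ i j, j < i → N₁ i j = 0) (hN₁d : ∀ i, N₁ i i = 1)
    (hA₁o : ∀ i j, i ≠ j → A₁ i j = 0) (hA₁p : ∀ i, 0 < A₁ i i)
    (hK₁ : K₁ᵀ * K₁ = 1)
    (hN₂t : ∀ i j, j < i → N₂ i j = 0) (hN₂d : ∀ i, N₂ i i = 1)
    (hA₂o : ∀ i j, i ≠ j → A₂ i j = 0) (hA₂p : ∀ i, 0 < A₂ i i)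
    (hK₂ : K₂ᵀ * K₂ = 1)
    (heq : N₁ * A₁ * K₁ = N₂ * A₂ * K₂) : N₁ = N₂ ∧ A₁ = A₂ ∧ K₁ = K₂ := by
  have hA₁ : A₁ = Matrix.diagonal (fun i => A₁ i i) := by
    ext i j
    by_cases h : i = j
    · subst h; simp
    · rw [Matrix.diagonal_apply_ne _ h]; exact hA₁o i j h
  have hA₂ : A₂ = Matrix.diagonal (fun i => A₂ i i) := by
    ext i j
    by_cases h : i = j
    · subst h; simp
    · rw [Matrix.diagonal_apply_ne _ h]; exact hA₂o i j h
  have htN₁ : N₁.BlockTriangular id := fun i j h => hN₁t i j h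
  have htN₂ : N₂.BlockTriangular id := fun i j h => hN₂t i j h
  have hdetN₁ : N₁.det = 1 := by
    rw [Matrix.det_of_upperTriangular htN₁]; simp [hN₁d]
  have hdetN₂ : N₂.det = 1 := by
    rw [Matrix.det_of_upperTriangular htN₂]; simp [hN₂d]
  haveI : Invertible N₁ := N₁.invertibleOfIsUnitDet (by rw [hdetN₁]; exact isUnit_one)
  haveI : Invertible N₂ := N₂.invertibleOfIsUnitDet (by rw [hdetN₂]; exact isUnit_one)
  haveI : Invertible A₂ := A₂.invertibleOfIsUnitDet (by
    rw [hA₂, Matrix.det_diagonal]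
    exact (Finset.prod_pos (fun i _ => hA₂p i)).ne'.isUnit)
  have hK₁' : K₁ * K₁ᵀ = 1 := mul_eq_one_comm.mp hK₁
  have hK₂' : K₂ * K₂ᵀ = 1 := mul_eq_one_comm.mp hK₂
  have hA₁T : A₁ᵀ = A₁ := by rw [hA₁, Matrix.diagonal_transpose]
  have hA₂T : A₂ᵀ = A₂ := by rw [hA₂, Matrix.diagonal_transpose]
  have e₁ : (N₁ * A₁ * K₁) * (N₁ * A₁ * K₁)ᵀ = N₁ * (A₁ * A₁) * N₁ᵀ := by
    have h1 : (N₁ * A₁ * K₁) * (N₁ * A₁ * K₁)ᵀ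
        = N₁ * (A₁ * (K₁ * (K₁ᵀ * (A₁ᵀ * N₁ᵀ)))) := by
      simp only [Matrix.transpose_mul, Matrix.mul_assoc]
    rw [h1, ← Matrix.mul_assoc K₁, hK₁', Matrix.one_mul, hA₁T]
    simp only [Matrix.mul_assoc]
  have e₂ : (N₂ * A₂ * K₂) * (N₂ * A₂ * K₂)ᵀ = N₂ * (A₂ * A₂) * N₂ᵀ := by
    have h1 : (N₂ * A₂ * K₂) * (N₂ * A₂ * K₂)ᵀ
        = N₂ * (A₂ * (K₂ * (K₂ᵀ * (A₂ᵀ * N₂ᵀ)))) := by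
      simp only [Matrix.transpose_mul, Matrix.mul_assoc]
    rw [h1, ← Matrix.mul_assoc K₂, hK₂', Matrix.one_mul, hA₂T]
    simp only [Matrix.mul_assoc]
  have hS : N₁ * (A₁ * A₁) * N₁ᵀ = N₂ * (A₂ * A₂) * N₂ᵀ := by
    rw [← e₁, heq, e₂]
  set T : Matrix (Fin n) (Fin n) ℝ := N₂⁻¹ * N₁ with hT
  have htT : T.BlockTriangular id :=
    (Matrix.blockTriangular_inv_of_blockTriangular htN₂).mul htN₁
  have hTd : ∀ i, T i i = 1 := fun i => by
    rw [hT, upper_mul_diag (Matrix.blockTriangular_inv_of_blockTriangular htN₂) htN₁,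
      upper_inv_diag_one htN₂ hN₂d, hN₁d, one_mul]
  haveI : Invertible T := T.invertibleOfIsUnitDet (by
    rw [Matrix.det_of_upperTriangular htT]; simp [hTd])
  haveI : Invertible N₂ᵀ := N₂.invertibleTranspose
  have hTD : T * (A₁ * A₁) * Tᵀ = A₂ * A₂ := by
    calc T * (A₁ * A₁) * Tᵀ
        = N₂⁻¹ * (N₁ * ((A₁ * A₁) * (N₁ᵀ * (N₂⁻¹)ᵀ))) := by
          rw [hT]; simp only [Matrix.transpose_mul, Matrix.mul_assoc]
      _ = N₂⁻¹ * (N₁ * (A₁ * A₁) * N₁ᵀ) * (N₂⁻¹)ᵀ := by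
          simp only [Matrix.mul_assoc]
      _ = N₂⁻¹ * (N₂ * (A₂ * A₂) * N₂ᵀ) * (N₂⁻¹)ᵀ := by rw [hS]
      _ = A₂ * A₂ := by
          rw [Matrix.transpose_nonsing_inv]
          calc N₂⁻¹ * (N₂ * (A₂ * A₂) * N₂ᵀ) * N₂ᵀ⁻¹
              = N₂⁻¹ * (N₂ * ((A₂ * A₂) * (N₂ᵀ * N₂ᵀ⁻¹))) := by
                simp only [Matrix.mul_assoc]
            _ = A₂ * A₂ := by
                rw [Matrix.mul_inv_of_invertible, Matrix.mul_one,
                  Matrix.inv_mul_cancel_left_of_invertible]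
  have hT1 : T = 1 := by
    haveI : Invertible Tᵀ := T.invertibleTranspose
    have hTD' : T * (A₁ * A₁) = (A₂ * A₂) * Tᵀ⁻¹ := by
      rw [← hTD, Matrix.mul_assoc (T * (A₁ * A₁)), Matrix.mul_inv_of_invertible,
        Matrix.mul_one]
    ext i j
    rcases lt_trichotomy i j with h | h | h
    · have h1 := congrFun (congrFun hTD' i) j
      rw [hA₁, hA₂, Matrix.diagonal_mul_diagonal, Matrix.diagonal_mul_diagonal,
        Matrix.mul_diagonal, Matrix.diagonal_mul, ← Matrix.transpose_nonsing_inv,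
        Matrix.transpose_apply] at h1
      have h2 : T⁻¹ j i = 0 :=
        (Matrix.blockTriangular_inv_of_blockTriangular htT) (show id i < id j from h)
      rw [h2, mul_zero] at h1
      have h3 : T i j = 0 :=
        (mul_eq_zero.mp h1).resolve_right (ne_of_gt (mul_pos (hA₁p j) (hA₁p j)))
      rw [h3, Matrix.one_apply_ne (ne_of_lt h)]
    · subst h; rw [hTd, Matrix.one_apply_eq]
    · rw [htT (show id j < id i from h), Matrix.one_apply_ne (ne_of_gt h)]
  have hN : N₁ = N₂ := by
    have h := congrArg (fun X => N₂ * X) hT1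
    simpa only [hT, Matrix.mul_inv_cancel_left_of_invertible, Matrix.mul_one] using h
  have hAA : A₁ * A₁ = A₂ * A₂ := by
    rw [← hTD, hT1, Matrix.transpose_one, Matrix.mul_one, Matrix.one_mul]
  have hA : A₁ = A₂ := by
    ext i j
    by_cases h : i = j
    · subst h
      have h1 := congrFun (congrFun hAA i) i
      rw [hA₁, hA₂, Matrix.diagonal_mul_diagonal, Matrix.diagonal_mul_diagonal,
        Matrix.diagonal_apply_eq, Matrix.diagonal_apply_eq] at h1
      exact (mul_self_inj (hA₁p i).le (hA₂p i).le).mp h1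
    · rw [hA₁o i j h, hA₂o i j h]
  refine ⟨hN, hA, ?_⟩
  rw [hN, hA] at heq
  have h := congrArg (fun X => A₂⁻¹ * (N₂⁻¹ * X)) heq
  simpa only [Matrix.mul_assoc, Matrix.inv_mul_cancel_left_of_invertible] using h

/-- Iwasawa decomposition of SL(n,ℝ) -/
theorem iwasawa_decomposition_SL
    (n : ℕ) (hn : 1 ≤ n)
    (g : Matrix (Fin n) (Fin n) ℝ) (hg : g.det = 1) :
    ∃! NAK : Matrix (Fin n) (Fin n) ℝ × Matrix (Fin n) (Fin n) ℝ ×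
        Matrix (Fin n) (Fin n) ℝ,
      (∀ i j : Fin n, j < i → NAK.1 i j = 0) ∧
      (∀ i : Fin n, NAK.1 i i = 1) ∧
      (∀ i j : Fin n, i ≠ j → NAK.2.1 i j = 0) ∧
      (∀ i : Fin n, 0 < NAK.2.1 i i) ∧
      NAK.2.1.det = 1 ∧
      Matrix.transpose NAK.2.2 * NAK.2.2 = 1 ∧
      NAK.2.2.det = 1 ∧
      g = NAK.1 * NAK.2.1 * NAK.2.2 := by
  haveI : Invertible g := g.invertibleOfIsUnitDet (by rw [hg]; exact isUnit_one)
  haveI : Invertible gᵀ := g.invertibleTranspose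
  have hS : Matrix.PosDef (n := (Fin n)ᵒᵈ) (g * gᵀ) := by
    refine Matrix.PosDef.of_dotProduct_mulVec_pos ?_ ?_
    · show (g * gᵀ)ᴴ = g * gᵀ
      rw [Matrix.conjTranspose_eq_transpose_of_trivial, Matrix.transpose_mul,
        Matrix.transpose_transpose]
    · intro (x : Fin n → ℝ) hx
      show 0 < star x ⬝ᵥ ((g * gᵀ) *ᵥ x)
      have hy : gᵀ *ᵥ x ≠ 0 := by
        intro h
        apply hx
        have := Matrix.mulVec_injective_of_invertible gᵀ
          (h.trans (Matrix.mulVec_zero gᵀ).symm)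
        exact this
      have h1 : star x ⬝ᵥ ((g * gᵀ) *ᵥ x) = (gᵀ *ᵥ x) ⬝ᵥ (gᵀ *ᵥ x) := by
        rw [star_trivial, ← Matrix.mulVec_mulVec, Matrix.dotProduct_mulVec,
          ← Matrix.mulVec_transpose]
      rw [h1, show (gᵀ *ᵥ x) ⬝ᵥ (gᵀ *ᵥ x) = star (gᵀ *ᵥ x) ⬝ᵥ (gᵀ *ᵥ x) by
        rw [star_trivial]]
      exact Matrix.dotProduct_star_self_pos_iff.mpr hy
  set M : Matrix (Fin n) (Fin n) ℝ := (LDL.lowerInv hS : Matrix (Fin n)ᵒᵈ (Fin n)ᵒᵈ ℝ) with hM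
  set d : Matrix (Fin n) (Fin n) ℝ := (LDL.diag hS : Matrix (Fin n)ᵒᵈ (Fin n)ᵒᵈ ℝ) with hd
  have hdM : d = M * (g * gᵀ) * Mᵀ := by
    rw [← Matrix.conjTranspose_eq_transpose_of_trivial]
    exact LDL.diag_eq_lowerInv_conj hS
  have hdo : ∀ i j : Fin n, i ≠ j → d i j = 0 := fun i j hij =>
    Matrix.diagonal_apply_ne _ (fun h : OrderDual.toDual i = OrderDual.toDual j => hij h)
  have hMt : ∀ i j : Fin n, j < i → M i j = 0 := fun i j hij =>
    LDL.lowerInv_triangular hS (show (OrderDual.toDual i) < OrderDual.toDual j from hij)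
  have hMd : ∀ i : Fin n, M i i = 1 := fun i => lowerInv_diag_one hS i
  have htM : M.BlockTriangular id := fun i j h => hMt i j h
  have hdetM : M.det = 1 := by
    rw [Matrix.det_of_upperTriangular htM]; simp [hMd]
  haveI : Invertible M := M.invertibleOfIsUnitDet (by rw [hdetM]; exact isUnit_one)
  haveI : Invertible Mᵀ := M.invertibleTranspose
  have hdpos : ∀ i : Fin n, 0 < d i i := by
    intro i
    set x : Fin n → ℝ := Mᵀ *ᵥ Pi.single i 1 with hx
    have hxne : x ≠ 0 := by
      intro h
      have h0 : (Pi.single i 1 : Fin n → ℝ) = 0 :=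
        Matrix.mulVec_injective_of_invertible Mᵀ (h.trans (Matrix.mulVec_zero Mᵀ).symm)
      simpa using congrFun h0 i
    have h2 : d i i = x ⬝ᵥ ((g * gᵀ) *ᵥ x) := by
      have e1 : d i i = Pi.single i 1 ⬝ᵥ (d *ᵥ Pi.single i 1) := by
        simp [Matrix.mulVec_single, single_dotProduct]
      rw [e1, hdM, ← Matrix.mulVec_mulVec, ← Matrix.mulVec_mulVec,
        Matrix.dotProduct_mulVec, ← Matrix.mulVec_transpose]
    rw [h2, show x ⬝ᵥ ((g * gᵀ) *ᵥ x) = star x ⬝ᵥ ((g * gᵀ) *ᵥ x) by rw [star_trivial]]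
    exact hS.dotProduct_mulVec_pos hxne
  set a : Fin n → ℝ := fun i => Real.sqrt (d i i) with ha
  have hapos : ∀ i, 0 < a i := fun i => Real.sqrt_pos.mpr (hdpos i)
  set A : Matrix (Fin n) (Fin n) ℝ := Matrix.diagonal a with hA
  have hAA : A * A = d := by
    rw [hA, Matrix.diagonal_mul_diagonal]
    ext i j
    by_cases h : i = j
    · subst h
      rw [Matrix.diagonal_apply_eq]
      exact Real.mul_self_sqrt (hdpos i).le
    · rw [Matrix.diagonal_apply_ne _ h]
      exact (hdo i j h).symm
  haveI : Invertible A := A.invertibleOfIsUnitDet (by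
    rw [hA, Matrix.det_diagonal]
    exact (Finset.prod_pos fun i _ => hapos i).ne'.isUnit)
  set N : Matrix (Fin n) (Fin n) ℝ := M⁻¹ with hN
  set K : Matrix (Fin n) (Fin n) ℝ := A⁻¹ * (M * g) with hK
  have hNt : ∀ i j : Fin n, j < i → N i j = 0 := fun i j h =>
    Matrix.blockTriangular_inv_of_blockTriangular htM (show id j < id i from h)
  have hNd : ∀ i : Fin n, N i i = 1 := fun i => upper_inv_diag_one htM hMd i
  have hAo : ∀ i j : Fin n, i ≠ j → A i j = 0 := fun i j h => Matrix.diagonal_apply_ne _ h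
  have hAd : ∀ i : Fin n, 0 < A i i := fun i => by
    rw [hA, Matrix.diagonal_apply_eq]; exact hapos i
  have hgNAK : g = N * A * K := by
    rw [hN, hK, Matrix.mul_assoc, Matrix.mul_inv_cancel_left_of_invertible,
      Matrix.inv_mul_cancel_left_of_invertible]
  have hKK' : K * Kᵀ = 1 := by
    have hBB : (M * g) * (M * g)ᵀ = A * A := by
      have h1 : (M * g) * (M * g)ᵀ = M * (g * gᵀ) * Mᵀ := by
        simp only [Matrix.transpose_mul, Matrix.mul_assoc]
      rw [h1, ← hdM, hAA]
    have h1 : K * Kᵀ = A⁻¹ * ((M * g) * (M * g)ᵀ) * (A⁻¹)ᵀ := by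
      rw [hK]; simp only [Matrix.transpose_mul, Matrix.mul_assoc]
    rw [h1, hBB, Matrix.transpose_nonsing_inv, hA, Matrix.diagonal_transpose, ← hA,
      Matrix.inv_mul_cancel_left_of_invertible, Matrix.mul_inv_of_invertible]
  have hKt : Kᵀ * K = 1 := mul_eq_one_comm.mp hKK'
  have hdetN : N.det = 1 := by
    have htN : N.BlockTriangular id := fun i j h => hNt i j h
    rw [Matrix.det_of_upperTriangular htN]; simp [hNd]
  have hdetApos : 0 < A.det := by
    rw [hA, Matrix.det_diagonal]; exact Finset.prod_pos fun i _ => hapos i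
  have hdetAK : A.det * K.det = 1 := by
    have h := hg
    rw [hgNAK, Matrix.det_mul, Matrix.det_mul, hdetN, one_mul] at h
    exact h
  have hdetK2 : K.det * K.det = 1 := by
    have h := congrArg Matrix.det hKt
    rwa [Matrix.det_mul, Matrix.det_transpose, Matrix.det_one] at h
  have hdetK : K.det = 1 := by
    rcases mul_self_eq_one_iff.mp hdetK2 with h | h
    · exact h
    · exfalso; rw [h] at hdetAK; nlinarith
  have hdetA : A.det = 1 := by rw [hdetK, mul_one] at hdetAK; exact hdetAK
  refine ⟨⟨N, A, K⟩, ⟨hNt, hNd, hAo, hAd, hdetA, hKt, hdetK, hgNAK⟩, ?_⟩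
  rintro ⟨N', A', K'⟩ ⟨h1, h2, h3, h4, h5, h6, h7, h8⟩
  obtain ⟨e1, e2, e3⟩ := iwasawa_unique N' A' K' N A K h1 h2 h3 h4 h6
    hNt hNd hAo hAd hKt (by rw [← h8, ← hgNAK])
  simp [Prod.ext_iff, e1, e2, e3]
end

section
/- (Signature of the DeWitt metric): Let n ≥ 2 and let g be a positive definite symmetric real n×n matrix. Define the DeWitt bilinear form on symmetric real n×n matrices by G(h,k) := tr(g⁻¹·h·g⁻¹·k) − tr(g⁻¹·h)·tr(g⁻¹·k). Then: (i) G is positive definite on the subspace {h symmetric : tr(g⁻¹·h) = 0}, i.e. G(h,h) > 0 for every nonzero symmetric h with tr(g⁻¹h) = 0; (ii) G(g,g) = n − n² < 0; and (iii) G(g,h) = 0 for every symmetric h with tr(g⁻¹h) = 0. In particular, G is a nondegenerate form of Lorentzian signature on the n(n+1)/2-dimensional space of symmetric matrices. -/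
open Matrix in
/-- Signature of the DeWitt metric: for a positive definite
symmetric `g`, the DeWitt form `G(h,k) = tr(g⁻¹hg⁻¹k) − tr(g⁻¹h)tr(g⁻¹k)` is
positive definite on the trace-free (w.r.t. `g`) symmetric matrices, satisfies
`G(g,g) = n − n² < 0`, and `g` is `G`-orthogonal to every symmetric `h` with
`tr(g⁻¹h) = 0`. -/
theorem deWitt_metric_lorentzian_signature
    (n : ℕ) (hn : 2 ≤ n)
    (g : Matrix (Fin n) (Fin n) ℝ) (hg : g.PosDef)
    (G : Matrix (Fin n) (Fin n) ℝ → Matrix (Fin n) (Fin n) ℝ → ℝ)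
    (hG : ∀ h k, G h k = (g⁻¹ * h * g⁻¹ * k).trace - (g⁻¹ * h).trace * (g⁻¹ * k).trace) :
    (∀ h : Matrix (Fin n) (Fin n) ℝ, h.IsSymm → h ≠ 0 → (g⁻¹ * h).trace = 0 →
        0 < G h h) ∧
    (G g g = (n : ℝ) - (n : ℝ) ^ 2 ∧ G g g < 0) ∧
    (∀ h : Matrix (Fin n) (Fin n) ℝ, h.IsSymm → (g⁻¹ * h).trace = 0 →
        G g h = 0) := by
  have hginv : (g⁻¹).PosDef := hg.inv
  open scoped MatrixOrder in
  obtain ⟨A, hAsymm, hAA, hAdet⟩ :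
      ∃ A : Matrix (Fin n) (Fin n) ℝ, Aᵀ = A ∧ A * A = g⁻¹ ∧ A.det ≠ 0 := by
    have hA := hginv.posSemidef
    refine ⟨CFC.sqrt (g⁻¹), ?_, CFC.sqrt_mul_sqrt_self _ hA.nonneg, ?_⟩
    · have := (CFC.sqrt_nonneg (g⁻¹)).posSemidef.isHermitian
      simpa [Matrix.IsHermitian] using this
    · intro h0
      have h1 : (CFC.sqrt (g⁻¹) * CFC.sqrt (g⁻¹)).det = (g⁻¹).det := by rw [CFC.sqrt_mul_sqrt_self _ hA.nonneg]
      rw [Matrix.det_mul, h0, mul_zero] at h1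
      exact hginv.det_pos.ne' h1.symm
  have hAinv : A⁻¹ * A = 1 := Matrix.nonsing_inv_mul A hAdet.isUnit
  have hAinv' : A * A⁻¹ = 1 := Matrix.mul_nonsing_inv A hAdet.isUnit
  have hgig : g⁻¹ * g = 1 := Matrix.nonsing_inv_mul g hg.det_pos.ne'.isUnit
  refine ⟨?_, ⟨?_, ?_⟩, ?_⟩
  · intro h hsymm hne htr
    rw [hG, htr, mul_zero, sub_zero]
    set M := A * h * A with hM
    have hMsymm : Mᵀ = M := by
      rw [hM, Matrix.transpose_mul, Matrix.transpose_mul, hAsymm, hsymm.eq, Matrix.mul_assoc]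
    have key : (g⁻¹ * h * g⁻¹ * h).trace = (M * M).trace := by
      have h1 : g⁻¹ * h * g⁻¹ * h = A * (A * h * A * A * h) := by
        rw [← hAA]; simp only [Matrix.mul_assoc]
      rw [h1, Matrix.trace_mul_comm]
      congr 1
      simp only [hM, Matrix.mul_assoc]
    rw [key]
    have hMne : M ≠ 0 := by
      intro hM0
      apply hne
      have h2 : A⁻¹ * M * A⁻¹ = h := by
        rw [hM]
        calc A⁻¹ * (A * h * A) * A⁻¹ = (A⁻¹ * A) * h * (A * A⁻¹) := by
              simp only [Matrix.mul_assoc]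
          _ = h := by rw [hAinv, hAinv', Matrix.one_mul, Matrix.mul_one]
      rw [hM0, Matrix.mul_zero, Matrix.zero_mul] at h2
      exact h2.symm
    have hsum : (M * M).trace = ∑ i, ∑ j, (M i j)^2 := by
      simp only [Matrix.trace, Matrix.diag, Matrix.mul_apply]
      refine Finset.sum_congr rfl fun i _ => Finset.sum_congr rfl fun j _ => ?_
      have hji : M j i = M i j := by
        have := congrFun (congrFun hMsymm i) j
        rwa [Matrix.transpose_apply] at this
      rw [hji]; ring
    rw [hsum, ← Finset.sum_product']
    obtain ⟨i, j, hij⟩ : ∃ i j, M i j ≠ 0 := by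
      by_contra hc
      push_neg at hc
      exact hMne (by ext i j; exact hc i j)
    apply Finset.sum_pos' (fun p _ => sq_nonneg _)
    exact ⟨(i, j), Finset.mem_univ _, by positivity⟩
  · rw [hG]
    rw [show g⁻¹ * g * g⁻¹ * g = (g⁻¹ * g) * (g⁻¹ * g) by simp only [Matrix.mul_assoc]]
    rw [hgig, Matrix.one_mul, Matrix.trace_one]
    simp; ring
  · rw [hG]
    rw [show g⁻¹ * g * g⁻¹ * g = (g⁻¹ * g) * (g⁻¹ * g) by simp only [Matrix.mul_assoc]]
    rw [hgig, Matrix.one_mul, Matrix.trace_one]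
    have h2 : (2:ℝ) ≤ (n:ℝ) := by exact_mod_cast hn
    simp only [Fintype.card_fin]
    nlinarith
  · intro h hsymm htr
    rw [hG]
    rw [show g⁻¹ * g * g⁻¹ * h = (g⁻¹ * g) * (g⁻¹ * h) by simp only [Matrix.mul_assoc]]
    rw [hgig, Matrix.one_mul, htr]
    simp
end
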